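/- Let μ be a positive measure on ℝ with moments of all orders and infinite support, with orthonormal polynomials (P_n). Let λ_N be the smallest eigenvalue of the Hankel matrix H_N = (s_{n+m})_{0≤n,m≤N}. Then for every z₀ ∈ ℂ with |z₀| < 1, λ_N ≤ ((1 − |z₀|²) Σ_{n=0}^N |P_n(z₀)|²)^{-1}. -/

import Mathlib

open MeasureTheory Polynomial Finset

/-- Upper bound for the smallest eigenvalue of the Hankel matrix of moments:
`λ_N ≤ ((1 - |z₀|²) ∑_{n=0}^N |P_n(z₀)|²)⁻¹` for `|z₀| < 1`. -/
theorem smallest_eigenvalue_upper_bound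
    (μ : Measure ℝ)
    (hmom : ∀ n : ℕ, Integrable (fun x => x ^ n) μ)
    (hsupp : ∀ p : Polynomial ℝ, p ≠ 0 → 0 < ∫ x, (p.eval x) ^ 2 ∂μ)
    (s : ℕ → ℝ) (hs : ∀ n, s n = ∫ x, x ^ n ∂μ)
    (P : ℕ → Polynomial ℝ)
    (hdeg : ∀ n, (P n).natDegree = n)
    (hlead : ∀ n, 0 < (P n).leadingCoeff)
    (horth : ∀ n m, ∫ x, (P n).eval x * (P m).eval x ∂μ = if n = m then 1 else 0)
    (N : ℕ) (lam : ℝ)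
    (hlam : IsLeast {r : ℝ | ∃ a : Fin (N + 1) → ℝ, (∑ i : Fin (N + 1), (a i) ^ 2) = 1 ∧
        r = ∑ i : Fin (N + 1), ∑ j : Fin (N + 1), s ((i : ℕ) + (j : ℕ)) * a i * a j} lam)
    (z₀ : ℂ) (hz₀ : ‖z₀‖ < 1) :
    lam ≤ ((1 - ‖z₀‖ ^ 2) *
        ∑ n ∈ Finset.range (N + 1), ‖Polynomial.aeval z₀ (P n)‖ ^ 2)⁻¹ := by
  classical
  -- basic integrability
  have hint : ∀ p : Polynomial ℝ, Integrable (fun x => p.eval x) μ := by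
    intro p
    have h : (fun x : ℝ => p.eval x)
        = fun x => ∑ i ∈ Finset.range (p.natDegree + 1), p.coeff i * x ^ i := by
      funext x; exact Polynomial.eval_eq_sum_range x
    rw [h]
    exact integrable_finset_sum _ (fun i _ => (hmom i).const_mul _)
  have hintmul : ∀ p q : Polynomial ℝ, Integrable (fun x => p.eval x * q.eval x) μ := by
    intro p q
    have := hint (p * q)
    simpa [Polynomial.eval_mul] using this
  -- orthogonality expansion
  have horthsum : ∀ a b : ℕ → ℝ,
      (∫ x, (∑ k ∈ Finset.range (N+1), a k * (P k).eval x) *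
           (∑ l ∈ Finset.range (N+1), b l * (P l).eval x) ∂μ)
        = ∑ k ∈ Finset.range (N+1), a k * b k := by
    intro a b
    have h1 : ∀ x : ℝ, (∑ k ∈ Finset.range (N+1), a k * (P k).eval x) *
           (∑ l ∈ Finset.range (N+1), b l * (P l).eval x)
         = ∑ k ∈ Finset.range (N+1), ∑ l ∈ Finset.range (N+1),
             (a k * b l) * ((P k).eval x * (P l).eval x) := by
      intro x
      rw [Finset.sum_mul_sum]
      refine Finset.sum_congr rfl fun k _ => Finset.sum_congr rfl fun l _ => by ring
    simp only [h1]
    rw [MeasureTheory.integral_finset_sum _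
      (fun k _ => integrable_finset_sum _ (fun l _ => ((hintmul (P k) (P l)).const_mul _)))]
    refine Finset.sum_congr rfl fun k hk => ?_
    rw [MeasureTheory.integral_finset_sum _ (fun l _ => ((hintmul (P k) (P l)).const_mul _))]
    have h2 : ∀ l ∈ Finset.range (N+1),
        (∫ x, (a k * b l) * ((P k).eval x * (P l).eval x) ∂μ)
          = if k = l then a k * b l else 0 := by
      intro l _
      rw [MeasureTheory.integral_const_mul _ _, horth k l]
      by_cases h : k = l <;> simp [h]
    rw [Finset.sum_congr rfl h2, Finset.sum_ite_eq]
    simp [hk]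
  -- quadratic form as an integral
  have hQint : ∀ w : Fin (N+1) → ℝ,
      (∑ i : Fin (N+1), ∑ j : Fin (N+1), s ((i:ℕ)+(j:ℕ)) * w i * w j)
        = ∫ x, (∑ i : Fin (N+1), w i * x ^ (i:ℕ)) ^ 2 ∂μ := by
    intro w
    have h1 : ∀ x : ℝ, (∑ i : Fin (N+1), w i * x ^ (i:ℕ)) ^ 2
        = ∑ i : Fin (N+1), ∑ j : Fin (N+1), (w i * w j) * x ^ ((i:ℕ)+(j:ℕ)) := by
      intro x
      rw [sq, Finset.sum_mul_sum]
      refine Finset.sum_congr rfl fun i _ => Finset.sum_congr rfl fun j _ => by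
        rw [pow_add]; ring
    simp only [h1]
    rw [MeasureTheory.integral_finset_sum _
      (fun i _ => integrable_finset_sum _ (fun j _ => ((hmom _).const_mul _)))]
    refine Finset.sum_congr rfl fun i _ => ?_
    rw [MeasureTheory.integral_finset_sum _ (fun j _ => ((hmom _).const_mul _))]
    refine Finset.sum_congr rfl fun j _ => ?_
    rw [MeasureTheory.integral_const_mul _ _, hs]
    ring
  -- lam times norm squared bounds the quadratic form
  have hlamle : ∀ w : Fin (N+1) → ℝ,
      lam * (∑ i : Fin (N+1), (w i)^2)
        ≤ ∑ i : Fin (N+1), ∑ j : Fin (N+1), s ((i:ℕ)+(j:ℕ)) * w i * w j := by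
    intro w
    by_cases hc : (∑ i : Fin (N+1), (w i)^2) = 0
    · have hw : ∀ i : Fin (N+1), w i = 0 := by
        intro i
        have h := (Finset.sum_eq_zero_iff_of_nonneg
          (fun i _ => sq_nonneg (w i))).1 hc i (Finset.mem_univ i)
        exact pow_eq_zero_iff (two_ne_zero) |>.1 h
      have hz : (∑ i : Fin (N+1), ∑ j : Fin (N+1), s ((i:ℕ)+(j:ℕ)) * w i * w j) = 0 :=
        Finset.sum_eq_zero fun i _ => Finset.sum_eq_zero fun j _ => by rw [hw i, hw j]; ring
      rw [hc, hz, mul_zero]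
    · have hc' : 0 < ∑ i : Fin (N+1), (w i)^2 :=
        lt_of_le_of_ne (Finset.sum_nonneg fun i _ => sq_nonneg _) (Ne.symm hc)
      set c := Real.sqrt (∑ i : Fin (N+1), (w i)^2) with hcdef
      have hcpos : 0 < c := Real.sqrt_pos.2 hc'
      have hcsq : c^2 = ∑ i : Fin (N+1), (w i)^2 := Real.sq_sqrt hc'.le
      have hnorm : (∑ i : Fin (N+1), (w i / c)^2) = 1 := by
        simp only [div_pow]
        rw [← Finset.sum_div, ← hcsq, div_self (pow_ne_zero _ hcpos.ne')]
      have hle := hlam.2 ⟨fun i => w i / c, hnorm, rfl⟩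
      have hQ : (∑ i : Fin (N+1), ∑ j : Fin (N+1), s ((i:ℕ)+(j:ℕ)) * (w i / c) * (w j / c))
          = (∑ i : Fin (N+1), ∑ j : Fin (N+1), s ((i:ℕ)+(j:ℕ)) * w i * w j) / c^2 := by
        rw [Finset.sum_div]
        refine Finset.sum_congr rfl fun i _ => ?_
        rw [Finset.sum_div]
        refine Finset.sum_congr rfl fun j _ => ?_
        ring
      rw [hQ] at hle
      have := (le_div_iff₀ (by positivity : (0:ℝ) < c^2)).1 hle
      rwa [hcsq] at this
  -- positivity of S
  set S : ℝ := ∑ n ∈ Finset.range (N + 1), ‖Polynomial.aeval z₀ (P n)‖ ^ 2 with hSdef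
  have hSnn : 0 ≤ S := by
    rw [hSdef]; positivity
  have hSpos : 0 < S := by
    have h0 : P 0 = Polynomial.C ((P 0).coeff 0) := Polynomial.eq_C_of_natDegree_eq_zero (hdeg 0)
    have hc0 : 0 < (P 0).coeff 0 := by
      have := hlead 0
      rwa [Polynomial.leadingCoeff, hdeg 0] at this
    have habs0 : ‖Polynomial.aeval z₀ (P 0)‖ = (P 0).coeff 0 := by
      conv_lhs => rw [h0]
      rw [Polynomial.aeval_C]
      simpa using abs_of_pos hc0
    have hle0 : ‖Polynomial.aeval z₀ (P 0)‖ ^ 2 ≤ S := by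
      rw [hSdef]
      exact Finset.single_le_sum (f := fun n => ‖Polynomial.aeval z₀ (P n)‖ ^ 2)
        (fun k _ => sq_nonneg _) (Finset.mem_range.2 (Nat.succ_pos N))
    nlinarith
  -- the Christoffel-kernel polynomials
  set Rp : Polynomial ℝ :=
    ∑ k ∈ Finset.range (N+1), Polynomial.C ((Polynomial.aeval z₀ (P k)).re) * P k with hRp
  set Ip : Polynomial ℝ :=
    ∑ k ∈ Finset.range (N+1), Polynomial.C (-(Polynomial.aeval z₀ (P k)).im) * P k with hIp
  have hevalR : ∀ x : ℝ, Rp.eval x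
      = ∑ k ∈ Finset.range (N+1), (Polynomial.aeval z₀ (P k)).re * (P k).eval x := by
    intro x; simp [hRp, Polynomial.eval_finset_sum]
  have hevalI : ∀ x : ℝ, Ip.eval x
      = ∑ k ∈ Finset.range (N+1), (-(Polynomial.aeval z₀ (P k)).im) * (P k).eval x := by
    intro x; simp [hIp, Polynomial.eval_finset_sum]
  have hintR : (∫ x, (Rp.eval x)^2 ∂μ)
      = ∑ k ∈ Finset.range (N+1), ((Polynomial.aeval z₀ (P k)).re)^2 := by
    have h := horthsum (fun k => (Polynomial.aeval z₀ (P k)).re)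
      (fun k => (Polynomial.aeval z₀ (P k)).re)
    simp only [pow_two, hevalR]
    exact h
  have hintI : (∫ x, (Ip.eval x)^2 ∂μ)
      = ∑ k ∈ Finset.range (N+1), ((Polynomial.aeval z₀ (P k)).im)^2 := by
    have h := horthsum (fun k => -(Polynomial.aeval z₀ (P k)).im)
      (fun k => -(Polynomial.aeval z₀ (P k)).im)
    simp only [pow_two, hevalI]
    rw [h]
    exact Finset.sum_congr rfl fun k _ => by ring
  have hdegR : Rp.natDegree ≤ N := by
    rw [hRp]
    refine Polynomial.natDegree_sum_le_of_forall_le _ _ fun k hk => ?_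
    refine le_trans (Polynomial.natDegree_C_mul_le _ _) ?_
    rw [hdeg k]; exact Nat.lt_succ_iff.1 (Finset.mem_range.1 hk)
  have hdegI : Ip.natDegree ≤ N := by
    rw [hIp]
    refine Polynomial.natDegree_sum_le_of_forall_le _ _ fun k hk => ?_
    refine le_trans (Polynomial.natDegree_C_mul_le _ _) ?_
    rw [hdeg k]; exact Nat.lt_succ_iff.1 (Finset.mem_range.1 hk)
  have hcoeffR : ∀ x : ℝ, Rp.eval x = ∑ i : Fin (N+1), Rp.coeff i * x ^ (i:ℕ) := by
    intro x
    rw [Fin.sum_univ_eq_sum_range (fun i => Rp.coeff i * x ^ i)]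
    exact Polynomial.eval_eq_sum_range' (Nat.lt_succ_of_le hdegR) x
  have hcoeffI : ∀ x : ℝ, Ip.eval x = ∑ i : Fin (N+1), Ip.coeff i * x ^ (i:ℕ) := by
    intro x
    rw [Fin.sum_univ_eq_sum_range (fun i => Ip.coeff i * x ^ i)]
    exact Polynomial.eval_eq_sum_range' (Nat.lt_succ_of_le hdegI) x
  -- the quadratic form of the coefficient vectors
  have hQR : (∑ i : Fin (N+1), ∑ j : Fin (N+1), s ((i:ℕ)+(j:ℕ)) * Rp.coeff i * Rp.coeff j)
      = ∑ k ∈ Finset.range (N+1), ((Polynomial.aeval z₀ (P k)).re)^2 := by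
    rw [hQint (fun i => Rp.coeff i), ← hintR]
    simp only [← hcoeffR]
  have hQI : (∑ i : Fin (N+1), ∑ j : Fin (N+1), s ((i:ℕ)+(j:ℕ)) * Ip.coeff i * Ip.coeff j)
      = ∑ k ∈ Finset.range (N+1), ((Polynomial.aeval z₀ (P k)).im)^2 := by
    rw [hQint (fun i => Ip.coeff i), ← hintI]
    simp only [← hcoeffI]
  -- key inequality: lam * W ≤ S
  set W : ℝ := (∑ i : Fin (N+1), (Rp.coeff i)^2) + (∑ i : Fin (N+1), (Ip.coeff i)^2) with hW
  have hWnn : 0 ≤ W := by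
    rw [hW]
    exact add_nonneg (Finset.sum_nonneg fun i _ => sq_nonneg _)
      (Finset.sum_nonneg fun i _ => sq_nonneg _)
  have hSsplit : S = (∑ k ∈ Finset.range (N+1), ((Polynomial.aeval z₀ (P k)).re)^2)
      + (∑ k ∈ Finset.range (N+1), ((Polynomial.aeval z₀ (P k)).im)^2) := by
    rw [hSdef, ← Finset.sum_add_distrib]
    refine Finset.sum_congr rfl fun k _ => ?_
    rw [Complex.sq_norm, Complex.normSq_apply]
    ring
  have hkey : lam * W ≤ S := by
    have h1 := hlamle (fun i => Rp.coeff i)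
    have h2 := hlamle (fun i => Ip.coeff i)
    rw [hQR] at h1
    rw [hQI] at h2
    rw [hW, mul_add, hSsplit]
    exact add_le_add h1 h2
  -- complex evaluation: the kernel value equals S
  have haevalR : (Polynomial.aeval z₀ Rp : ℂ)
      = ∑ k ∈ Finset.range (N+1), ((Polynomial.aeval z₀ (P k)).re : ℂ)
          * Polynomial.aeval z₀ (P k) := by
    rw [hRp, map_sum]
    exact Finset.sum_congr rfl fun k _ => by
      rw [map_mul, Polynomial.aeval_C]
      norm_num
  have haevalI : (Polynomial.aeval z₀ Ip : ℂ)
      = ∑ k ∈ Finset.range (N+1), ((-(Polynomial.aeval z₀ (P k)).im : ℝ) : ℂ)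
          * Polynomial.aeval z₀ (P k) := by
    rw [hIp, map_sum]
    exact Finset.sum_congr rfl fun k _ => by
      rw [map_mul, Polynomial.aeval_C]
      norm_num
  have hqval : (Polynomial.aeval z₀ Rp : ℂ) + Complex.I * Polynomial.aeval z₀ Ip = (S : ℂ) := by
    rw [haevalR, haevalI, Finset.mul_sum, ← Finset.sum_add_distrib]
    have hterm : ∀ z : ℂ, ((z.re : ℂ)) * z + Complex.I * (((-z.im : ℝ) : ℂ) * z)
        = ((‖z‖ ^ 2 : ℝ) : ℂ) := by
      intro z
      rw [Complex.sq_norm]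
      apply Complex.ext <;>
        simp [Complex.normSq_apply] <;> ring
    rw [Finset.sum_congr rfl fun k _ => hterm (Polynomial.aeval z₀ (P k)), hSdef]
    push_cast
    ring
  -- the coefficient form of the kernel value
  have hqval2 : (Polynomial.aeval z₀ Rp : ℂ) + Complex.I * Polynomial.aeval z₀ Ip
      = ∑ i ∈ Finset.range (N+1),
          (((Rp.coeff i : ℂ)) + Complex.I * (Ip.coeff i : ℂ)) * z₀ ^ i := by
    rw [Polynomial.aeval_eq_sum_range' (Nat.lt_succ_of_le hdegR) z₀,
      Polynomial.aeval_eq_sum_range' (Nat.lt_succ_of_le hdegI) z₀,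
      Finset.mul_sum, ← Finset.sum_add_distrib]
    refine Finset.sum_congr rfl fun i _ => ?_
    rw [Complex.real_smul, Complex.real_smul]
    ring
  -- Cauchy-Schwarz and geometric-series bound
  set t : ℝ := ‖z₀‖ ^ 2 with ht
  have ht0 : 0 ≤ t := sq_nonneg _
  have ht1 : t < 1 := by
    rw [ht]
    calc ‖z₀‖ ^ 2 ≤ ‖z₀‖ * 1 := by
          rw [sq]; exact mul_le_mul_of_nonneg_left hz₀.le (norm_nonneg _)
      _ < 1 := by rwa [mul_one]
  have hCS : S ^ 2 ≤ W * (∑ i ∈ Finset.range (N+1), t ^ i) := by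
    have hstep : S ≤ ∑ i ∈ Finset.range (N+1),
        ‖(Rp.coeff i : ℂ) + Complex.I * (Ip.coeff i : ℂ)‖ * ‖z₀‖ ^ i := by
      calc S = ‖(Polynomial.aeval z₀ Rp : ℂ) + Complex.I * Polynomial.aeval z₀ Ip‖ := by
            rw [hqval, Complex.norm_real, Real.norm_eq_abs, abs_of_nonneg hSnn]
        _ = ‖∑ i ∈ Finset.range (N+1),
              (((Rp.coeff i : ℂ)) + Complex.I * (Ip.coeff i : ℂ)) * z₀ ^ i‖ := by rw [hqval2]
        _ ≤ ∑ i ∈ Finset.range (N+1),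
              ‖(((Rp.coeff i : ℂ)) + Complex.I * (Ip.coeff i : ℂ)) * z₀ ^ i‖ :=
            norm_sum_le _ _
        _ = ∑ i ∈ Finset.range (N+1),
              ‖(Rp.coeff i : ℂ) + Complex.I * (Ip.coeff i : ℂ)‖
                * ‖z₀‖ ^ i := by
            refine Finset.sum_congr rfl fun i _ => ?_
            rw [norm_mul, norm_pow]
    have hsq : S ^ 2 ≤ (∑ i ∈ Finset.range (N+1),
        ‖(Rp.coeff i : ℂ) + Complex.I * (Ip.coeff i : ℂ)‖
          * ‖z₀‖ ^ i) ^ 2 := pow_le_pow_left₀ hSnn hstep 2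
    refine hsq.trans ?_
    refine (Finset.sum_mul_sq_le_sq_mul_sq _ _ _).trans ?_
    apply le_of_eq
    have e1 : (∑ i ∈ Finset.range (N+1),
        ‖(Rp.coeff i : ℂ) + Complex.I * (Ip.coeff i : ℂ)‖ ^ 2) = W := by
      rw [hW, Fin.sum_univ_eq_sum_range (fun i => (Rp.coeff i)^2),
          Fin.sum_univ_eq_sum_range (fun i => (Ip.coeff i)^2), ← Finset.sum_add_distrib]
      refine Finset.sum_congr rfl fun i _ => ?_
      rw [Complex.sq_norm, Complex.normSq_apply]
      simp
      ring
    have e2 : (∑ i ∈ Finset.range (N+1), (‖z₀‖ ^ i) ^ 2)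
        = ∑ i ∈ Finset.range (N+1), t ^ i := by
      refine Finset.sum_congr rfl fun i _ => ?_
      rw [ht, ← pow_mul, ← pow_mul, mul_comm]
    rw [e1, e2]
  have hgeom : (1 - t) * (∑ i ∈ Finset.range (N+1), t ^ i) ≤ 1 := by
    have hg := geom_sum_mul t (N+1)
    nlinarith [pow_nonneg ht0 (N+1)]
  have hWlow : (1 - t) * S ^ 2 ≤ W := by
    calc (1 - t) * S ^ 2 ≤ (1 - t) * (W * ∑ i ∈ Finset.range (N+1), t ^ i) :=
          mul_le_mul_of_nonneg_left hCS (by linarith)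
      _ = W * ((1 - t) * ∑ i ∈ Finset.range (N+1), t ^ i) := by ring
      _ ≤ W * 1 := mul_le_mul_of_nonneg_left hgeom hWnn
      _ = W := mul_one W
  -- conclusion
  have hTS : 0 < (1 - t) * S := mul_pos (by linarith) hSpos
  rcases le_or_gt lam 0 with hneg | hpos
  · exact hneg.trans (inv_pos.2 hTS).le
  · have h1 : lam * ((1 - t) * S ^ 2) ≤ lam * W := mul_le_mul_of_nonneg_left hWlow hpos.le
    have h2 : lam * ((1 - t) * S ^ 2) ≤ S := h1.trans hkey
    have hpos2 : (0:ℝ) < (1 - t) * S ^ 2 :=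
      mul_pos (by linarith) (pow_pos hSpos 2)
    have heq : ((1 - t) * S)⁻¹ = S / ((1 - t) * S ^ 2) := by
      rw [eq_div_iff hpos2.ne']
      have h1t : (1:ℝ) - t ≠ 0 := by linarith
      field_simp
    rw [heq, le_div_iff₀ hpos2]
    linarith
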